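/- Let p be an odd prime, n ≥ 1, q = p^(2^n), and G = PGL₂(F_q). If y ∈ G is an involution lying in the image of SL₂(F_q) in G, then the centralizer C_G(y) is isomorphic to the dihedral group of order 2(q−1). -/

import Mathlib

open Matrix

/-- `PGL₂(F)`: the projective general linear group, i.e. the quotient of `GL₂(F)`
by its center. -/
abbrev ProjectiveGL2 (F : Type) [Field F] : Type :=
  Matrix.GeneralLinearGroup (Fin 2) F ⧸ Subgroup.center (Matrix.GeneralLinearGroup (Fin 2) F)

/-- The image of the natural map `SL₂(F) → PGL₂(F)`: the socle of `PGL₂(F)`,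
isomorphic to `PSL₂(F)`. -/
def socleSL2 (F : Type) [Field F] : Subgroup (ProjectiveGL2 F) :=
  ((QuotientGroup.mk' (Subgroup.center (Matrix.GeneralLinearGroup (Fin 2) F))).comp
    Matrix.SpecialLinearGroup.toGL).range

namespace PGLAux
variable {F : Type} [Field F]

def scU (c : Fˣ) : GL (Fin 2) F :=
  ⟨!![(c : F), 0; 0, (c : F)], !![((c⁻¹ : Fˣ) : F), 0; 0, ((c⁻¹ : Fˣ) : F)],
    by ext i j; fin_cases i <;> fin_cases j <;> simp [mul_fin_two],
    by ext i j; fin_cases i <;> fin_cases j <;> simp [mul_fin_two]⟩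

@[simp] lemma scU_val (c : Fˣ) : (scU c : Matrix (Fin 2) (Fin 2) F) = !![(c:F),0;0,(c:F)] := rfl

def dU (a : Fˣ) : GL (Fin 2) F :=
  ⟨!![(a : F), 0; 0, 1], !![((a⁻¹ : Fˣ) : F), 0; 0, 1],
    by ext i j; fin_cases i <;> fin_cases j <;> simp [mul_fin_two],
    by ext i j; fin_cases i <;> fin_cases j <;> simp [mul_fin_two]⟩

@[simp] lemma dU_val (a : Fˣ) : (dU a : Matrix (Fin 2) (Fin 2) F) = !![(a:F),0;0,1] := rfl

def sU (a : Fˣ) : GL (Fin 2) F :=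
  ⟨!![0, 1; (a : F), 0], !![0, ((a⁻¹ : Fˣ) : F); 1, 0],
    by ext i j; fin_cases i <;> fin_cases j <;> simp [mul_fin_two],
    by ext i j; fin_cases i <;> fin_cases j <;> simp [mul_fin_two]⟩

@[simp] lemma sU_val (a : Fˣ) : (sU a : Matrix (Fin 2) (Fin 2) F) = !![0,1;(a:F),0] := rfl

def DU : GL (Fin 2) F :=
  ⟨!![1, 0; 0, -1], !![1, 0; 0, -1],
    by ext i j; fin_cases i <;> fin_cases j <;> simp [mul_fin_two],
    by ext i j; fin_cases i <;> fin_cases j <;> simp [mul_fin_two]⟩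

@[simp] lemma DU_val : ((DU : GL (Fin 2) F) : Matrix (Fin 2) (Fin 2) F) = !![1,0;0,-1] := rfl

/- product identities -/
lemma dU_mul_dU (a b : Fˣ) : (dU a) * (dU b) = (dU (a*b) : GL (Fin 2) F) := by
  ext i j
  show ((dU a : Matrix (Fin 2) (Fin 2) F) * (dU b : Matrix (Fin 2) (Fin 2) F)) i j = _
  rw [dU_val, dU_val, dU_val, mul_fin_two]
  fin_cases i <;> fin_cases j <;> simp

lemma sU_mul_dU (a b : Fˣ) : (sU a) * (dU b) = (sU (a*b) : GL (Fin 2) F) := by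
  ext i j
  show ((sU a : Matrix (Fin 2) (Fin 2) F) * (dU b : Matrix (Fin 2) (Fin 2) F)) i j = _
  rw [sU_val, dU_val, sU_val, mul_fin_two]
  fin_cases i <;> fin_cases j <;> simp [mul_comm]

lemma dU_mul_sU (a b : Fˣ) : (dU a) * (sU b) = scU a * (sU (b*a⁻¹) : GL (Fin 2) F) := by
  ext i j
  show ((dU a : Matrix (Fin 2) (Fin 2) F) * (sU b : Matrix (Fin 2) (Fin 2) F)) i j
    = ((scU a : Matrix (Fin 2) (Fin 2) F) * (sU (b*a⁻¹) : Matrix (Fin 2) (Fin 2) F)) i j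
  rw [dU_val, sU_val, scU_val, sU_val, mul_fin_two, mul_fin_two]
  fin_cases i <;> fin_cases j <;> simp <;> field_simp

lemma sU_mul_sU (a b : Fˣ) : (sU a) * (sU b) = scU a * (dU (b*a⁻¹) : GL (Fin 2) F) := by
  ext i j
  show ((sU a : Matrix (Fin 2) (Fin 2) F) * (sU b : Matrix (Fin 2) (Fin 2) F)) i j
    = ((scU a : Matrix (Fin 2) (Fin 2) F) * (dU (b*a⁻¹) : Matrix (Fin 2) (Fin 2) F)) i j
  rw [sU_val, sU_val, scU_val, dU_val, mul_fin_two, mul_fin_two]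
  fin_cases i <;> fin_cases j <;> simp <;> field_simp

lemma dU_mul_DU (a : Fˣ) : (dU a) * DU = DU * (dU a : GL (Fin 2) F) := by
  ext i j
  show ((dU a : Matrix (Fin 2) (Fin 2) F) * ((DU : GL (Fin 2) F) : Matrix (Fin 2) (Fin 2) F)) i j
    = (((DU : GL (Fin 2) F) : Matrix (Fin 2) (Fin 2) F) * (dU a : Matrix (Fin 2) (Fin 2) F)) i j
  rw [dU_val, DU_val, mul_fin_two, mul_fin_two]
  fin_cases i <;> fin_cases j <;> simp

lemma sU_mul_DU (a : Fˣ) : (sU a) * DU = scU (-1) * (DU * (sU a : GL (Fin 2) F)) := by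
  ext i j
  show ((sU a : Matrix (Fin 2) (Fin 2) F) * ((DU : GL (Fin 2) F) : Matrix (Fin 2) (Fin 2) F)) i j
    = (((scU (-1) : GL (Fin 2) F) : Matrix (Fin 2) (Fin 2) F) * (((DU : GL (Fin 2) F) : Matrix (Fin 2) (Fin 2) F) * (sU a : Matrix (Fin 2) (Fin 2) F))) i j
  rw [sU_val, DU_val, scU_val, mul_fin_two, mul_fin_two, mul_fin_two]
  fin_cases i <;> fin_cases j <;> simp

lemma scU_val_smul (c : Fˣ) : (scU c : Matrix (Fin 2) (Fin 2) F) = (c : F) • 1 := by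
  ext i j; fin_cases i <;> fin_cases j <;> simp

lemma scU_mem_center (c : Fˣ) : scU c ∈ Subgroup.center (GL (Fin 2) F) := by
  rw [Subgroup.mem_center_iff]
  intro g
  ext : 1
  show (g : Matrix (Fin 2) (Fin 2) F) * (scU c : Matrix (Fin 2) (Fin 2) F)
      = (scU c : Matrix (Fin 2) (Fin 2) F) * g
  rw [scU_val_smul, mul_smul_comm, smul_mul_assoc, mul_one, one_mul]

lemma mem_center_iff {g : GL (Fin 2) F} :
    g ∈ Subgroup.center (GL (Fin 2) F) ↔ ∃ c : Fˣ, g = scU c := by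
  constructor
  · intro hg
    rw [Subgroup.mem_center_iff] at hg
    rcases g with ⟨A, B, hAB, hBA⟩
    have hE : ∀ (u : GL (Fin 2) F),
        (u : Matrix (Fin 2) (Fin 2) F) * A = A * (u : Matrix (Fin 2) (Fin 2) F) := by
      intro u
      have h := congrArg Units.val (hg u)
      simpa [Units.val_mul] using h
    have e1 := hE ⟨!![1,1;0,1], !![1,-1;0,1],
      by ext i j; fin_cases i <;> fin_cases j <;> simp [mul_fin_two],
      by ext i j; fin_cases i <;> fin_cases j <;> simp [mul_fin_two]⟩
    have e2 := hE ⟨!![1,0;1,1], !![1,0;-1,1],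
      by ext i j; fin_cases i <;> fin_cases j <;> simp [mul_fin_two],
      by ext i j; fin_cases i <;> fin_cases j <;> simp [mul_fin_two]⟩
    rw [eta_fin_two A] at e1 e2
    simp only [mul_fin_two] at e1 e2
    have hc : A 1 0 = 0 := by
      have h := congrFun (congrFun e1 0) 0
      simp at h
      linear_combination h
    have hb : A 0 1 = 0 := by
      have h := congrFun (congrFun e2 0) 0
      simp at h
      linear_combination h
    have hd : A 1 1 = A 0 0 := by
      have h := congrFun (congrFun e1 0) 1
      simp at h
      linear_combination h
    have hdetu : IsUnit (A.det) := IsUnit.of_mul_eq_one _ (by rw [← det_mul, hAB, det_one])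
    have ha : A 0 0 ≠ 0 := by
      rw [det_fin_two, hb, hc, hd, isUnit_iff_ne_zero] at hdetu
      intro h0
      apply hdetu
      rw [h0]; ring
    refine ⟨Units.mk0 (A 0 0) ha, ?_⟩
    ext i j
    fin_cases i <;> fin_cases j <;> simp [scU_val, hb, hc, hd]
  · rintro ⟨c, rfl⟩; exact scU_mem_center c

variable (F) in
def piGL : GL (Fin 2) F →* ProjectiveGL2 F :=
  QuotientGroup.mk' (Subgroup.center (GL (Fin 2) F))

lemma piGL_scU (c : Fˣ) : piGL F (scU c) = 1 :=
  (QuotientGroup.eq_one_iff _).2 (scU_mem_center c)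

lemma piGL_scU_mul (c : Fˣ) (u : GL (Fin 2) F) : piGL F (scU c * u) = piGL F u := by
  rw [_root_.map_mul, piGL_scU, one_mul]

lemma piGL_eq_one_iff {u : GL (Fin 2) F} : piGL F u = 1 ↔ ∃ c : Fˣ, u = scU c := by
  rw [show piGL F u = 1 ↔ u ∈ Subgroup.center (GL (Fin 2) F) from QuotientGroup.eq_one_iff u,
    mem_center_iff]

lemma piGL_eq_iff {u v : GL (Fin 2) F} : piGL F u = piGL F v ↔ ∃ c : Fˣ, v = u * scU c := by
  constructor
  · intro h
    have h' : piGL F (u⁻¹ * v) = 1 := by rw [_root_.map_mul, ← h, _root_.map_inv, inv_mul_cancel]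
    obtain ⟨c, hc⟩ := piGL_eq_one_iff.1 h'
    exact ⟨c, by rw [← hc, mul_inv_cancel_left]⟩
  · rintro ⟨c, rfl⟩
    rw [_root_.map_mul, piGL_scU, mul_one]

def theta (m : ℕ) (φ : ZMod m → Fˣ) : DihedralGroup m → ProjectiveGL2 F
  | DihedralGroup.r i => piGL F (dU (φ i))
  | DihedralGroup.sr i => piGL F (sU (φ i))

@[simp] lemma theta_r (m : ℕ) (φ : ZMod m → Fˣ) (i : ZMod m) :
    theta m φ (DihedralGroup.r i) = piGL F (dU (φ i)) := rfl
@[simp] lemma theta_sr (m : ℕ) (φ : ZMod m → Fˣ) (i : ZMod m) :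
    theta m φ (DihedralGroup.sr i) = piGL F (sU (φ i)) := rfl

def thetaHom (m : ℕ) (φ : ZMod m → Fˣ) (hadd : ∀ i j, φ (i + j) = φ i * φ j) :
    DihedralGroup m →* ProjectiveGL2 F :=
  MonoidHom.mk' (theta m φ) (by
    have hsub : ∀ i j : ZMod m, φ j * (φ i)⁻¹ = φ (j - i) := by
      intro i j
      rw [mul_inv_eq_iff_eq_mul, ← hadd, sub_add_cancel]
    rintro (i | i) (j | j)
    · rw [DihedralGroup.r_mul_r]
      simp only [theta_r]
      rw [← _root_.map_mul, dU_mul_dU, hadd]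
    · rw [DihedralGroup.r_mul_sr]
      simp only [theta_r, theta_sr]
      rw [← _root_.map_mul, dU_mul_sU, piGL_scU_mul, hsub]
    · rw [DihedralGroup.sr_mul_r]
      simp only [theta_r, theta_sr]
      rw [← _root_.map_mul, sU_mul_dU, hadd]
    · rw [DihedralGroup.sr_mul_sr]
      simp only [theta_r, theta_sr]
      rw [← _root_.map_mul, sU_mul_sU, piGL_scU_mul, hsub])


lemma thetaHom_apply (m : ℕ) (φ : ZMod m → Fˣ) (hadd : ∀ i j, φ (i + j) = φ i * φ j)
    (x : DihedralGroup m) : thetaHom m φ hadd x = theta m φ x := rfl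

lemma centralizer_DU_iso [Fintype F] (h2 : (2 : F) ≠ 0) :
    Nonempty ((Subgroup.centralizer {piGL F (DU : GL (Fin 2) F)} : Subgroup (ProjectiveGL2 F))
      ≃* DihedralGroup (Fintype.card F - 1)) := by
  classical
  obtain ⟨g, hg⟩ := IsCyclic.exists_generator (α := Fˣ)
  set m := Fintype.card F - 1 with hm
  have h1m : 1 ≤ m := by
    have := Fintype.one_lt_card (α := F)
    omega
  haveI : NeZero m := ⟨by omega⟩
  have horder : orderOf g = m := by
    rw [orderOf_eq_card_of_forall_mem_zpowers hg, Nat.card_eq_fintype_card,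
      Fintype.card_units, hm]
  set φ : ZMod m → Fˣ := fun k => g ^ k.val with hφ
  have hadd : ∀ i j, φ (i + j) = φ i * φ j := by
    intro i j
    rw [hφ]
    simp only
    rw [← pow_add]
    refine (pow_eq_pow_iff_modEq).2 ?_
    rw [horder]
    show (i + j).val % m = (i.val + j.val) % m
    rw [ZMod.val_add, Nat.mod_mod_of_dvd _ dvd_rfl]
  have hone : ∀ i, φ i = 1 → i = 0 := by
    intro i hi
    have : orderOf g ∣ i.val := orderOf_dvd_of_pow_eq_one hi
    rw [horder] at this
    have := Nat.eq_zero_of_dvd_of_lt this (ZMod.val_lt i)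
    · exact (ZMod.val_eq_zero i).1 (by omega)
  have hsurj : ∀ u : Fˣ, ∃ i, φ i = u := by
    intro u
    obtain ⟨k, hk⟩ := mem_powers_iff_mem_zpowers.2 (hg u)
    refine ⟨(k : ZMod m), ?_⟩
    rw [hφ]
    simp only
    rw [ZMod.val_natCast, ← horder, pow_mod_orderOf]
    exact hk
  set Θ : DihedralGroup m →* ProjectiveGL2 F := thetaHom m φ hadd with hΘ
  -- injectivity
  have hinj : Function.Injective Θ := by
    refine (injective_iff_map_eq_one Θ).2 ?_
    rintro (i | i) h
    · rw [hΘ, thetaHom_apply, theta_r, piGL_eq_one_iff] at h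
      obtain ⟨c, hc⟩ := h
      have hval := congrArg Units.val hc
      rw [dU_val, scU_val] at hval
      have h11 : (1 : F) = c := by
        have := congrFun (congrFun hval 1) 1; simpa using this
      have h00 : (φ i : F) = c := by
        have := congrFun (congrFun hval 0) 0; simpa using this
      have : φ i = 1 := Units.ext (by rw [h00, ← h11, Units.val_one])
      rw [DihedralGroup.one_def, hone i this]
    · rw [hΘ, thetaHom_apply, theta_sr, piGL_eq_one_iff] at h
      obtain ⟨c, hc⟩ := h
      have hval := congrArg Units.val hc
      rw [sU_val, scU_val] at hval
      have h01 : (1 : F) = 0 := by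
        have := congrFun (congrFun hval 0) 1; simpa using this
      exact absurd h01 one_ne_zero
  -- range
  have hrange : Θ.range = Subgroup.centralizer {piGL F (DU : GL (Fin 2) F)} := by
    apply le_antisymm
    · rintro _ ⟨x, rfl⟩
      rw [Subgroup.mem_centralizer_singleton_iff]
      cases x with
      | r i =>
        rw [hΘ, thetaHom_apply, theta_r, ← _root_.map_mul, ← _root_.map_mul, dU_mul_DU]
      | sr i =>
        rw [hΘ, thetaHom_apply, theta_sr, ← _root_.map_mul, ← _root_.map_mul, sU_mul_DU,
          piGL_scU_mul]
    · intro x hx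
      rw [Subgroup.mem_centralizer_singleton_iff] at hx
      obtain ⟨u, hu⟩ := QuotientGroup.mk'_surjective (Subgroup.center (GL (Fin 2) F)) x
      have hu' : piGL F u = x := hu
      rw [← hu'] at hx ⊢
      rw [← _root_.map_mul, ← _root_.map_mul, piGL_eq_iff] at hx
      obtain ⟨c, hc⟩ := hx
      have hval := congrArg Units.val hc
      simp only [Units.val_mul] at hval
      rw [eta_fin_two (u : Matrix (Fin 2) (Fin 2) F), DU_val, scU_val] at hval
      set a := (u : Matrix (Fin 2) (Fin 2) F) 0 0
      set b := (u : Matrix (Fin 2) (Fin 2) F) 0 1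
      set c0 := (u : Matrix (Fin 2) (Fin 2) F) 1 0
      set d := (u : Matrix (Fin 2) (Fin 2) F) 1 1
      simp only [mul_fin_two] at hval
      have e00 : a = a * c := by
        have h := congrFun (congrFun hval 0) 0
        simp at h
        linear_combination h
      have e01 : b = - (b * c) := by
        have h := congrFun (congrFun hval 0) 1
        simp at h
        linear_combination h
      have e10 : c0 = - (c0 * c) := by
        have h := congrFun (congrFun hval 1) 0
        simp at h
        linear_combination -h
      have e11 : d = d * c := by
        have h := congrFun (congrFun hval 1) 1
        simp at h
        linear_combination h
      -- determinant
      have hdetu : ((u : Matrix (Fin 2) (Fin 2) F)).det ≠ 0 :=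
        ((Matrix.isUnit_iff_isUnit_det _).1 u.isUnit).ne_zero
      have hdet2 : a * d - b * c0 ≠ 0 := by
        rwa [det_fin_two] at hdetu
      have hcc : (c : F) = 1 ∨ (c : F) = -1 := by
        have hd := congrArg (fun z : GL (Fin 2) F => (z : Matrix (Fin 2) (Fin 2) F).det) hc
        simp only [Units.val_mul, det_mul] at hd
        rw [DU_val, scU_val] at hd
        have hDU : (!![1,0;0,-1] : Matrix (Fin 2) (Fin 2) F).det = -1 := by
          simp [det_fin_two]
        have hsc : (!![(c:F),0;0,(c:F)] : Matrix (Fin 2) (Fin 2) F).det = (c:F) * c := by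
          simp [det_fin_two]
        rw [hDU, hsc] at hd
        have : ((u : Matrix (Fin 2) (Fin 2) F)).det * ((c:F) * c - 1) = 0 := by
          linear_combination hd
        rcases mul_eq_zero.1 this with h | h
        · exact absurd h hdetu
        · exact mul_self_eq_one_iff.1 (by linear_combination h)
      rcases hcc with h1 | h1
      · -- diagonal case
        have hb : b = 0 := by
          have : (2 : F) * b = 0 := by rw [h1] at e01; linear_combination e01
          exact (mul_eq_zero.1 this).resolve_left h2
        have hc0 : c0 = 0 := by
          have : (2 : F) * c0 = 0 := by rw [h1] at e10; linear_combination e10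
          exact (mul_eq_zero.1 this).resolve_left h2
        have ha : a ≠ 0 := by
          intro h; rw [h, hb] at hdet2; simp at hdet2
        have hd0 : d ≠ 0 := by
          intro h; rw [h, hb] at hdet2; simp at hdet2
        obtain ⟨k, hk⟩ := hsurj (Units.mk0 a ha * (Units.mk0 d hd0)⁻¹)
        refine ⟨DihedralGroup.r k, ?_⟩
        rw [hΘ, thetaHom_apply, theta_r, hk]
        have : u = scU (Units.mk0 d hd0) * dU (Units.mk0 a ha * (Units.mk0 d hd0)⁻¹) := by
          ext i j
          show (u : Matrix (Fin 2) (Fin 2) F) i j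
            = ((scU (Units.mk0 d hd0) : Matrix (Fin 2) (Fin 2) F)
              * (dU (Units.mk0 a ha * (Units.mk0 d hd0)⁻¹) : Matrix (Fin 2) (Fin 2) F)) i j
          rw [scU_val, dU_val, mul_fin_two]
          rw [eta_fin_two (u : Matrix (Fin 2) (Fin 2) F)]
          fin_cases i <;> fin_cases j <;> (try simp [hb, hc0, Units.val_mk0]) <;>
            first
              | exact hb
              | exact hc0
              | rfl
                | rw [mul_comm a, ← mul_assoc, mul_inv_cancel₀ hd0, one_mul]
        rw [← piGL_scU_mul (Units.mk0 d hd0) (dU _), ← this]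
      · -- antidiagonal case
        have ha : a = 0 := by
          have : (2 : F) * a = 0 := by rw [h1] at e00; linear_combination e00
          exact (mul_eq_zero.1 this).resolve_left h2
        have hd0 : d = 0 := by
          have : (2 : F) * d = 0 := by rw [h1] at e11; linear_combination e11
          exact (mul_eq_zero.1 this).resolve_left h2
        have hbne : b ≠ 0 := by
          intro h; rw [h, ha] at hdet2; simp at hdet2
        have hc0ne : c0 ≠ 0 := by
          intro h; rw [h, ha] at hdet2; simp at hdet2
        obtain ⟨k, hk⟩ := hsurj (Units.mk0 c0 hc0ne * (Units.mk0 b hbne)⁻¹)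
        refine ⟨DihedralGroup.sr k, ?_⟩
        rw [hΘ, thetaHom_apply, theta_sr, hk]
        have : u = scU (Units.mk0 b hbne) * sU (Units.mk0 c0 hc0ne * (Units.mk0 b hbne)⁻¹) := by
          ext i j
          show (u : Matrix (Fin 2) (Fin 2) F) i j
            = ((scU (Units.mk0 b hbne) : Matrix (Fin 2) (Fin 2) F)
              * (sU (Units.mk0 c0 hc0ne * (Units.mk0 b hbne)⁻¹) : Matrix (Fin 2) (Fin 2) F)) i j
          rw [scU_val, sU_val, mul_fin_two]
          rw [eta_fin_two (u : Matrix (Fin 2) (Fin 2) F)]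
          fin_cases i <;> fin_cases j <;> (try simp [ha, hd0, Units.val_mk0]) <;>
            first
              | exact ha
              | exact hd0
              | rfl
                | rw [mul_comm c0, ← mul_assoc, mul_inv_cancel₀ hbne, one_mul]
        rw [← piGL_scU_mul (Units.mk0 b hbne) (sU _), ← this]
  exact ⟨((MonoidHom.ofInjective hinj).trans (MulEquiv.subgroupCongr hrange)).symm⟩

/-- conjugation of centralizers -/
lemma map_conj_centralizer {G : Type*} [Group G] (t x : G) :
    (Subgroup.centralizer {x}).map ((MulAut.conj t : G ≃* G) : G →* G)
      = Subgroup.centralizer {t * x * t⁻¹} := by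
  ext h
  simp only [Subgroup.mem_map, Subgroup.mem_centralizer_singleton_iff]
  constructor
  · rintro ⟨k, hk, rfl⟩
    show (t * k * t⁻¹) * (t * x * t⁻¹) = (t * x * t⁻¹) * (t * k * t⁻¹)
    calc (t * k * t⁻¹) * (t * x * t⁻¹) = t * (k * x) * t⁻¹ := by group
    _ = t * (x * k) * t⁻¹ := by rw [hk]
    _ = (t * x * t⁻¹) * (t * k * t⁻¹) := by group
  · intro hh
    refine ⟨t⁻¹ * h * t, ?_, by show t * (t⁻¹ * h * t) * t⁻¹ = h; group⟩
    show (t⁻¹ * h * t) * x = x * (t⁻¹ * h * t)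
    have e1 : (t⁻¹ * h * t) * x = t⁻¹ * (h * (t * x * t⁻¹)) * t := by group
    have e2 : x * (t⁻¹ * h * t) = t⁻¹ * ((t * x * t⁻¹) * h) * t := by group
    rw [e1, e2, hh]

noncomputable def centralizerConjEquiv {G : Type*} [Group G] (t x : G) :
    (Subgroup.centralizer {x} : Subgroup G) ≃* Subgroup.centralizer {t * x * t⁻¹} :=
  (MulEquiv.subgroupMap (MulAut.conj t : G ≃* G) _).trans
    (MulEquiv.subgroupCongr (map_conj_centralizer t x))

lemma involution_conj (h2 : (2:F) ≠ 0) {im : F} (hi : im * im = -1)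
    {y : ProjectiveGL2 F} (hy : orderOf y = 2) (hyS : y ∈ socleSL2 F) :
    ∃ t : GL (Fin 2) F, y = piGL F t * piGL F DU * (piGL F t)⁻¹ := by
  obtain ⟨S, hS⟩ := hyS
  have hS' : piGL F (Matrix.SpecialLinearGroup.toGL S) = y := hS
  have hy2 : y * y = 1 := by
    have h := pow_orderOf_eq_one y
    rwa [hy, pow_two] at h
  have hy1 : y ≠ 1 := by
    intro h
    rw [h, orderOf_one] at hy
    omega
  set U : GL (Fin 2) F := Matrix.SpecialLinearGroup.toGL S with hU
  have hUnc : ∀ c : Fˣ, U ≠ scU c := by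
    intro c hcc
    apply hy1
    rw [← hS', hcc, piGL_scU]
  have hUU : piGL F (U * U) = 1 := by rw [_root_.map_mul, hS', hy2]
  obtain ⟨c, hc⟩ := piGL_eq_one_iff.1 hUU
  have hval : ((S : Matrix (Fin 2) (Fin 2) F)) * (S : Matrix (Fin 2) (Fin 2) F)
      = !![(c:F),0;0,(c:F)] := by
    have h := congrArg Units.val hc
    simp only [Units.val_mul] at h
    rw [scU_val] at h
    exact h
  have hdetS : ((S : Matrix (Fin 2) (Fin 2) F)).det = 1 := S.property
  obtain ⟨a, b, c0, d, hA⟩ : ∃ a b c0 d, (S : Matrix (Fin 2) (Fin 2) F) = !![a, b; c0, d] :=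
    ⟨_, _, _, _, eta_fin_two _⟩
  have hdet : a * d - b * c0 = 1 := by
    rw [hA, det_fin_two_of] at hdetS
    exact hdetS
  have hval' := hval
  rw [hA, mul_fin_two] at hval'
  have m00 : a * a + b * c0 = c := by
    have h := congrFun (congrFun hval' 0) 0; simpa using h
  have m01 : a * b + b * d = 0 := by
    have h := congrFun (congrFun hval' 0) 1; simpa using h
  have m10 : c0 * a + d * c0 = 0 := by
    have h := congrFun (congrFun hval' 1) 0; simpa using h
  have m11 : c0 * b + d * d = c := by
    have h := congrFun (congrFun hval' 1) 1; simpa using h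
  have hcc : (c : F) = 1 ∨ (c : F) = -1 := by
    have hd2 := congrArg Matrix.det hval
    rw [det_mul, hdetS, det_fin_two_of] at hd2
    refine mul_self_eq_one_iff.1 ?_
    linear_combination -hd2
  have hUval : (U : Matrix (Fin 2) (Fin 2) F) = !![a, b; c0, d] := hA
  rcases hcc with h1 | h1
  · -- S² = 1 : impossible
    exfalso
    rw [h1] at m00 m11
    by_cases had : a + d = 0
    · apply h2
      linear_combination (-1) * m00 - hdet + a * had
    · have hb0 : b = 0 := by
        have h := mul_eq_zero.1 (show b * (a + d) = 0 by linear_combination m01)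
        exact h.resolve_right had
      have hc00 : c0 = 0 := by
        have h := mul_eq_zero.1 (show c0 * (a + d) = 0 by linear_combination m10)
        exact h.resolve_right had
      have hda : d = a := by
        linear_combination (-d) * m00 + a * hdet + (a + d) * c0 * hb0
      have ha0 : a ≠ 0 := by
        intro h0
        rw [h0, hb0] at hdet
        simp at hdet
      apply hUnc (Units.mk0 a ha0)
      ext i j
      show (U : Matrix (Fin 2) (Fin 2) F) i j
        = (scU (Units.mk0 a ha0) : Matrix (Fin 2) (Fin 2) F) i j
      rw [hUval, scU_val]
      fin_cases i <;> fin_cases j <;> simp [hb0, hc00, hda]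
  · -- S² = -1
    rw [h1] at m00 m11
    have him0 : im ≠ 0 := by
      intro h0
      rw [h0] at hi
      exact one_ne_zero (by linear_combination hi : (1:F) = 0)
    have hda : d = -a := by
      by_cases had : a + d = 0
      · linear_combination had
      · exfalso
        have hb0 : b = 0 := by
          have h := mul_eq_zero.1 (show b * (a + d) = 0 by linear_combination m01)
          exact h.resolve_right had
        have ha0 : a ≠ 0 := by
          intro h0
          rw [h0, hb0] at hdet
          simp at hdet
        have h := mul_eq_zero.1 (show a * (a + d) = 0 by linear_combination m00 + hdet)
        exact had (h.resolve_left ha0)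
    set imu : Fˣ := Units.mk0 im him0 with himu
    set W : GL (Fin 2) F := scU imu * DU with hW
    have hWval : (W : Matrix (Fin 2) (Fin 2) F) = !![im, 0; 0, -im] := by
      rw [hW]
      show (scU imu : Matrix (Fin 2) (Fin 2) F)
        * ((DU : GL (Fin 2) F) : Matrix (Fin 2) (Fin 2) F) = _
      rw [scU_val, DU_val, mul_fin_two]
      ext i j
      fin_cases i <;> fin_cases j <;> simp [himu]
    have hπW : piGL F W = piGL F DU := by rw [hW, piGL_scU_mul]
    by_cases hbz : b = 0
    · by_cases hcz : c0 = 0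
      · -- already diagonal
        have ha0 : a ≠ 0 := by
          intro h0
          rw [h0, hbz] at m00
          exact one_ne_zero (by linear_combination m00 : (1:F) = 0)
        have hU2 : U = scU (Units.mk0 a ha0) * DU := by
          ext i j
          show (U : Matrix (Fin 2) (Fin 2) F) i j
            = ((scU (Units.mk0 a ha0) : Matrix (Fin 2) (Fin 2) F)
              * ((DU : GL (Fin 2) F) : Matrix (Fin 2) (Fin 2) F)) i j
          rw [hUval, scU_val, DU_val, mul_fin_two]
          fin_cases i <;> fin_cases j <;> simp [hbz, hcz, hda]
        refine ⟨1, ?_⟩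
        rw [← hS', hU2, piGL_scU_mul]
        simp
      · -- c0 ≠ 0 : conjugate by !![a + im, a - im; c0, c0]
        have hdT : (!![a + im, a - im; c0, c0] : Matrix (Fin 2) (Fin 2) F).det ≠ 0 := by
          rw [det_fin_two_of]
          intro h
          have h' : (2 : F) * (im * c0) = 0 := by linear_combination h
          rcases mul_eq_zero.1 h' with h'' | h''
          · exact h2 h''
          · rcases mul_eq_zero.1 h'' with h3 | h3
            · exact him0 h3
            · exact hcz h3
        set T : GL (Fin 2) F := Matrix.GeneralLinearGroup.mkOfDetNeZero _ hdT with hT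
        have hTval : (T : Matrix (Fin 2) (Fin 2) F) = !![a + im, a - im; c0, c0] := rfl
        have key : U * T = T * W := by
          ext i j
          show ((U : Matrix (Fin 2) (Fin 2) F) * (T : Matrix (Fin 2) (Fin 2) F)) i j
            = ((T : Matrix (Fin 2) (Fin 2) F) * (W : Matrix (Fin 2) (Fin 2) F)) i j
          rw [hUval, hTval, hWval, mul_fin_two, mul_fin_two]
          fin_cases i <;> fin_cases j <;> simp <;>
            first
                | linear_combination m00 - hi
                | linear_combination hi - m00
                | linear_combination c0 * hda
                | linear_combination (-c0) * hda
                | linear_combination m00 - hi + (im - a) * hda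
                | linear_combination hi - m00 - (im - a) * hda
                | linear_combination m00 - hi + (-im - a) * hda
                | linear_combination hi - m00 - (-im - a) * hda
                | ring
        refine ⟨T, ?_⟩
        have hU2 : U = T * W * T⁻¹ := eq_mul_inv_iff_mul_eq.mpr key
        rw [← hS', hU2]
        rw [_root_.map_mul, _root_.map_mul, _root_.map_inv, hπW]
    · -- b ≠ 0 : conjugate by !![b, b; im - a, -im - a]
      have hdT : (!![b, b; im - a, -im - a] : Matrix (Fin 2) (Fin 2) F).det ≠ 0 := by
        rw [det_fin_two_of]
        intro h
        have h' : (2 : F) * (b * im) = 0 := by linear_combination -h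
        rcases mul_eq_zero.1 h' with h'' | h''
        · exact h2 h''
        · rcases mul_eq_zero.1 h'' with h3 | h3
          · exact hbz h3
          · exact him0 h3
      set T : GL (Fin 2) F := Matrix.GeneralLinearGroup.mkOfDetNeZero _ hdT with hT
      have hTval : (T : Matrix (Fin 2) (Fin 2) F) = !![b, b; im - a, -im - a] := rfl
      have key : U * T = T * W := by
        ext i j
        show ((U : Matrix (Fin 2) (Fin 2) F) * (T : Matrix (Fin 2) (Fin 2) F)) i j
          = ((T : Matrix (Fin 2) (Fin 2) F) * (W : Matrix (Fin 2) (Fin 2) F)) i j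
        rw [hUval, hTval, hWval, mul_fin_two, mul_fin_two]
        fin_cases i <;> fin_cases j <;> simp <;>
          first
              | linear_combination m00 - hi
              | linear_combination hi - m00
              | linear_combination c0 * hda
              | linear_combination (-c0) * hda
              | linear_combination m00 - hi + (im - a) * hda
              | linear_combination hi - m00 - (im - a) * hda
              | linear_combination m00 - hi + (-im - a) * hda
              | linear_combination hi - m00 - (-im - a) * hda
              | ring
      refine ⟨T, ?_⟩
      have hU2 : U = T * W * T⁻¹ := eq_mul_inv_iff_mul_eq.mpr key
      rw [← hS', hU2]
      rw [_root_.map_mul, _root_.map_mul, _root_.map_inv, hπW]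

end PGLAux

/-- The centralizer of an inner involution of `PGL₂(q)`, `q = p^(2^n)`, is dihedral
of order `2(q-1)`. -/
theorem centralizer_inner_involution_isDihedral (p n : ℕ) (hp : Nat.Prime p) (hodd : Odd p) (hn : 1 ≤ n)
    (F : Type) [Field F] [Fintype F] (hF : Fintype.card F = p ^ 2 ^ n)
    (y : ProjectiveGL2 F) (hy : orderOf y = 2) (hyS : y ∈ socleSL2 F) :
    Nonempty (Subgroup.centralizer {y} ≃* DihedralGroup (p ^ 2 ^ n - 1)) := by
  classical
  have hcard_odd : Fintype.card F % 2 = 1 := by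
    rw [hF]
    exact Nat.odd_iff.1 hodd.pow
  have h2 : (2 : F) ≠ 0 := by
    intro h20
    have hchar : ringChar F ∣ 2 := (ringChar.spec (R := F) 2).1 h20
    rcases (Nat.dvd_prime Nat.prime_two).1 hchar with h | h
    · exact CharP.ringChar_ne_one h
    · have := FiniteField.even_card_iff_char_two.1 h
      omega
  have hsq : IsSquare (-1 : F) := by
    rw [FiniteField.isSquare_neg_one_iff, hF]
    have h4 : p ^ 2 ^ n % 4 = 1 := by
      have h2n : 2 ^ n = 2 * 2 ^ (n - 1) := by
        conv_lhs => rw [show n = (n - 1) + 1 by omega]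
        rw [pow_succ']
      rw [h2n, pow_mul]
      have hp4 : p ^ 2 % 4 = 1 := by
        obtain ⟨k, hk⟩ := hodd
        have : p ^ 2 = 4 * (k * k + k) + 1 := by rw [hk]; ring
        rw [this, Nat.mul_add_mod]
      rw [Nat.pow_mod, hp4, one_pow]
      rfl
    omega
  obtain ⟨im, him⟩ := hsq
  obtain ⟨t, ht⟩ := PGLAux.involution_conj h2 (him.symm) hy hyS
  obtain ⟨e⟩ := PGLAux.centralizer_DU_iso (F := F) h2
  rw [← hF]
  refine ⟨?_⟩
  have e2 : (Subgroup.centralizer {y} : Subgroup (ProjectiveGL2 F))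
      ≃* Subgroup.centralizer {PGLAux.piGL F PGLAux.DU} := by
    rw [ht]
    exact (PGLAux.centralizerConjEquiv (PGLAux.piGL F t) (PGLAux.piGL F PGLAux.DU)).symm
  exact e2.trans e
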